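/- Let k be a field of characteristic zero, n a positive natural number, and λ a Young diagram with n cells. Let T : Fin n ≃ λ.cells be a bijective filling of λ. In the group algebra k[S_n] of the symmetric group S_n = Equiv.Perm (Fin n), let R(T) = {w ∈ S_n : for all i, T(w(i)) lies in the same row as T(i)} and C(T) = {w ∈ S_n : for all i, T(w(i)) lies in the same column as T(i)} be the row and column stabilizer subgroups, and set a_T = Σ_{w∈R(T)} w and b_T = Σ_{w∈C(T)} sgn(w)·w. Let z_n = Σ_{σ∈S_n, σ a transposition} σ be the sum of all transpositions. Then (a_T · b_T) · z_n = (ξ(λ) − ξ(λ'))·(a_T · b_T), where λ' is the transpose (conjugate) of λ and ξ(μ) = Σ_i binom(μ_i, 2) is the sum over the rows of μ of the binomial coefficient 'row length choose 2'. -/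

import Mathlib

open scoped Classical

/-- The formal sum `a_T = ∑_{w ∈ R(T)} w` over the row stabilizer of the filling `T`,
in the group algebra of `S_n`. -/
noncomputable def rowSym (k : Type*) [Field k] {n : ℕ} (Y : YoungDiagram)
    (T : Fin n ≃ Y.cells) : MonoidAlgebra k (Equiv.Perm (Fin n)) :=
  ∑ w ∈ Finset.univ.filter
      (fun w : Equiv.Perm (Fin n) => ∀ i : Fin n, (T (w i)).val.1 = (T i).val.1),
    MonoidAlgebra.single w 1

/-- The signed formal sum `b_T = ∑_{w ∈ C(T)} sgn(w)·w` over the column stabilizer of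
the filling `T`, in the group algebra of `S_n`. -/
noncomputable def colSym (k : Type*) [Field k] {n : ℕ} (Y : YoungDiagram)
    (T : Fin n ≃ Y.cells) : MonoidAlgebra k (Equiv.Perm (Fin n)) :=
  ∑ w ∈ Finset.univ.filter
      (fun w : Equiv.Perm (Fin n) => ∀ i : Fin n, (T (w i)).val.2 = (T i).val.2),
    MonoidAlgebra.single w ((Equiv.Perm.sign w : ℤ) : k)

/-- The sum `z_n` of all transpositions of `S_n` in the group algebra. -/
noncomputable def transpositionSum (k : Type*) [Field k] (n : ℕ) :
    MonoidAlgebra k (Equiv.Perm (Fin n)) :=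
  ∑ w ∈ Finset.univ.filter (fun w : Equiv.Perm (Fin n) => w.IsSwap),
    MonoidAlgebra.single w 1

/-- `ξ(Y) = ∑_i binom(rowLen Y i, 2)`, summed over the rows of `Y`. -/
def xi (Y : YoungDiagram) : ℕ :=
  ∑ i ∈ Finset.range (Y.colLen 0), (Y.rowLen i).choose 2

lemma rowSym_mul_single {k : Type*} [Field k] {n : ℕ} {Y : YoungDiagram}
    (T : Fin n ≃ Y.cells) (w : Equiv.Perm (Fin n))
    (hw : ∀ i, (T (w i)).val.1 = (T i).val.1) :
    rowSym k Y T * MonoidAlgebra.single w (1 : k) = rowSym k Y T := by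
  unfold rowSym
  rw [Finset.sum_mul]
  simp_rw [MonoidAlgebra.single_mul_single, mul_one]
  refine Finset.sum_equiv (Equiv.mulRight w) ?_ ?_
  · intro u
    simp only [Finset.mem_filter, Finset.mem_univ, true_and, Equiv.coe_mulRight]
    constructor
    · intro hu i
      rw [Equiv.Perm.mul_apply, hu, hw]
    · intro hu i
      have h1 := hu (w⁻¹ i)
      rw [Equiv.Perm.mul_apply, ← Equiv.Perm.mul_apply w, mul_inv_cancel, Equiv.Perm.one_apply] at h1
      have h2 := hw (w⁻¹ i)
      rw [← Equiv.Perm.mul_apply w, mul_inv_cancel, Equiv.Perm.one_apply] at h2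
      rw [h1, h2]
  · intro u _
    rfl

lemma single_mul_colSym {k : Type*} [Field k] {n : ℕ} {Y : YoungDiagram}
    (T : Fin n ≃ Y.cells) (w : Equiv.Perm (Fin n))
    (hw : ∀ i, (T (w i)).val.2 = (T i).val.2) :
    MonoidAlgebra.single w (((Equiv.Perm.sign w : ℤ) : k)) * colSym k Y T = colSym k Y T := by
  unfold colSym
  rw [Finset.mul_sum]
  simp_rw [MonoidAlgebra.single_mul_single]
  refine Finset.sum_equiv (Equiv.mulLeft w) ?_ ?_
  · intro u
    simp only [Finset.mem_filter, Finset.mem_univ, true_and, Equiv.coe_mulLeft]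
    constructor
    · intro hu i
      rw [Equiv.Perm.mul_apply, hw, hu]
    · intro hu i
      have h1 := hu i
      rw [Equiv.Perm.mul_apply, hw] at h1
      exact h1
  · intro u _
    simp only [Equiv.coe_mulLeft]
    rw [map_mul]
    push_cast
    ring_nf

lemma isSwap_conj {n : ℕ} {τ : Equiv.Perm (Fin n)} (h : τ.IsSwap) (w : Equiv.Perm (Fin n)) :
    (w * τ * w⁻¹).IsSwap := by
  obtain ⟨a, b, hab, rfl⟩ := h
  exact ⟨w a, w b, fun hc => hab (w.injective hc), (Equiv.swap_apply_apply w a b).symm⟩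

lemma single_mul_transpositionSum {k : Type*} [Field k] {n : ℕ} (w : Equiv.Perm (Fin n)) (c : k) :
    MonoidAlgebra.single w c * transpositionSum k n
      = transpositionSum k n * MonoidAlgebra.single w c := by
  unfold transpositionSum
  rw [Finset.mul_sum, Finset.sum_mul]
  simp_rw [MonoidAlgebra.single_mul_single, mul_one, one_mul]
  refine Finset.sum_equiv ⟨fun τ => w * τ * w⁻¹, fun τ => w⁻¹ * τ * w, fun τ => by group,
    fun τ => by group⟩ ?_ ?_
  · intro τ
    simp only [Finset.mem_filter, Finset.mem_univ, true_and, Equiv.coe_fn_mk]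
    constructor
    · intro h; exact isSwap_conj h w
    · intro h
      have := isSwap_conj h w⁻¹
      simpa [mul_assoc] using this
  · intro τ _
    simp only [Equiv.coe_fn_mk]
    congr 1
    group

lemma mul_transpositionSum_comm {k : Type*} [Field k] {n : ℕ}
    (x : MonoidAlgebra k (Equiv.Perm (Fin n))) :
    x * transpositionSum k n = transpositionSum k n * x := by
  induction x using MonoidAlgebra.induction_on with
  | of a => simpa using single_mul_transpositionSum a (1 : k)
  | add f g hf hg => rw [add_mul, mul_add, hf, hg]
  | smul r f hf => rw [smul_mul_assoc, mul_smul_comm, hf]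

lemma swap_conj_identity {α : Type*} [DecidableEq α] {x y z : α}
    (hxy : x ≠ y) (hzx : z ≠ x) (hzy : z ≠ y) :
    Equiv.swap x z * Equiv.swap x y = Equiv.swap x y * Equiv.swap y z := by
  ext i
  simp only [Equiv.Perm.mul_apply, Equiv.swap_apply_def]
  split_ifs <;> simp_all

lemma single_swap_mul_colSym {k : Type*} [Field k] {n : ℕ} {Y : YoungDiagram}
    (T : Fin n ≃ Y.cells) {x y : Fin n} (hxy : x ≠ y)
    (hw : ∀ i, (T (Equiv.swap x y i)).val.2 = (T i).val.2) :
    MonoidAlgebra.single (Equiv.swap x y) (1 : k) * colSym k Y T = -colSym k Y T := by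
  have h := single_mul_colSym (k := k) T (Equiv.swap x y) hw
  rw [Equiv.Perm.sign_swap hxy] at h
  push_cast at h
  have hs : MonoidAlgebra.single (Equiv.swap x y) (-1 : k)
      = -MonoidAlgebra.single (Equiv.swap x y) (1 : k) := by
    rw [← MonoidAlgebra.single_neg]
  rw [hs, neg_mul] at h
  exact neg_eq_iff_eq_neg.1 h

lemma mixed_aux {k : Type*} [Field k] [CharZero k] {n : ℕ} {Y : YoungDiagram}
    (T : Fin n ≃ Y.cells) {x y : Fin n}
    (hlt : (T x).val.1 < (T y).val.1) (hcol : (T x).val.2 ≠ (T y).val.2) :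
    rowSym k Y T * MonoidAlgebra.single (Equiv.swap x y) (1 : k) * colSym k Y T = 0 := by
  have hxy : x ≠ y := fun h => by subst h; exact lt_irrefl _ hlt
  have hdY : ((T x).val.1, (T y).val.2) ∈ Y.cells := by
    rw [YoungDiagram.mem_cells]
    exact Y.up_left_mem (le_of_lt hlt) (le_refl _)
      (by rw [Prod.mk.eta]; exact (YoungDiagram.mem_cells _).mp (T y).2)
  obtain ⟨z, hTz⟩ : ∃ z : Fin n, (T z).val = ((T x).val.1, (T y).val.2) :=
    ⟨T.symm ⟨((T x).val.1, (T y).val.2), hdY⟩, by rw [Equiv.apply_symm_apply]⟩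
  have hzx : z ≠ x := by
    intro h
    apply hcol
    rw [← h, hTz]
  have hzy : z ≠ y := by
    intro h
    rw [h] at hTz
    have : (T y).val.1 = (T x).val.1 := by rw [hTz]
    omega
  have hp : ∀ i, (T (Equiv.swap x z i)).val.1 = (T i).val.1 := by
    intro i
    rcases eq_or_ne i x with rfl | hix
    · rw [Equiv.swap_apply_left, hTz]
    · rcases eq_or_ne i z with rfl | hiz
      · rw [Equiv.swap_apply_right, hTz]
      · rw [Equiv.swap_apply_of_ne_of_ne hix hiz]
  have hq : ∀ i, (T (Equiv.swap y z i)).val.2 = (T i).val.2 := by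
    intro i
    rcases eq_or_ne i y with rfl | hiy
    · rw [Equiv.swap_apply_left, hTz]
    · rcases eq_or_ne i z with rfl | hiz
      · rw [Equiv.swap_apply_right, hTz]
      · rw [Equiv.swap_apply_of_ne_of_ne hiy hiz]
  have hpq : Equiv.swap x z * Equiv.swap x y = Equiv.swap x y * Equiv.swap y z :=
    swap_conj_identity hxy hzx hzy
  set M := rowSym k Y T * MonoidAlgebra.single (Equiv.swap x y) (1 : k) * colSym k Y T with hM
  have key : M = -M := by
    conv_lhs => rw [hM, ← rowSym_mul_single T (Equiv.swap x z) hp]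
    rw [mul_assoc (rowSym k Y T), MonoidAlgebra.single_mul_single, hpq,
      ← MonoidAlgebra.single_mul_single, ← mul_assoc, mul_assoc,
      single_swap_mul_colSym T (Ne.symm hzy) hq, mul_neg, ← hM]
  have h2 : (2 : k) • M = 0 := by
    rw [two_smul]
    nth_rewrite 1 [key]
    rw [neg_add_cancel]
  rcases smul_eq_zero.1 h2 with h | h
  · exact absurd h two_ne_zero
  · exact h

lemma pair_swap_eq {α : Type*} [DecidableEq α] {x y a b : α} (hxy : x ≠ y) (hab : a ≠ b)
    (h : ({x, y} : Finset α) = {a, b}) : Equiv.swap x y = Equiv.swap a b := by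
  have hx : x ∈ ({a, b} : Finset α) := by rw [← h]; simp
  have hy : y ∈ ({a, b} : Finset α) := by rw [← h]; simp
  simp only [Finset.mem_insert, Finset.mem_singleton] at hx hy
  rcases hx with rfl | rfl
  · rcases hy with rfl | rfl
    · exact absurd rfl hxy
    · rfl
  · rcases hy with rfl | rfl
    · exact Equiv.swap_comm _ _
    · exact absurd rfl hxy

lemma swap_count {n : ℕ} (f : Fin n → ℕ) :
    (Finset.univ.filter (fun w : Equiv.Perm (Fin n) => w.IsSwap ∧ ∀ i, f (w i) = f i)).card
      = ∑ v ∈ Finset.univ.image f, ((Finset.univ.filter (fun x => f x = v)).card).choose 2 := by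
  have hcard : ∀ v ∈ Finset.univ.image f,
      (((Finset.univ.filter (fun x => f x = v)).powersetCard 2).card)
        = ((Finset.univ.filter (fun x => f x = v)).card).choose 2 :=
    fun v _ => Finset.card_powersetCard 2 _
  rw [← Finset.sum_congr rfl hcard, ← Finset.card_biUnion]
  · refine Finset.card_bij (fun w _ => w.support) ?_ ?_ ?_
    · rintro w hw
      rw [Finset.mem_filter] at hw
      obtain ⟨-, ⟨a, b, hab, rfl⟩, hpre⟩ := hw
      rw [Equiv.Perm.support_swap hab, Finset.mem_biUnion]
      have hfab : f b = f a := by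
        have := hpre a
        rwa [Equiv.swap_apply_left] at this
      refine ⟨f a, Finset.mem_image.2 ⟨a, Finset.mem_univ a, rfl⟩, ?_⟩
      rw [Finset.mem_powersetCard]
      constructor
      · intro c hc
        simp only [Finset.mem_insert, Finset.mem_singleton] at hc
        rcases hc with rfl | rfl <;> simp [hfab]
      · exact Finset.card_pair hab
    · rintro w hw w' hw' hs
      rw [Finset.mem_filter] at hw hw'
      obtain ⟨-, ⟨a, b, hab, rfl⟩, -⟩ := hw
      obtain ⟨-, ⟨c, d, hcd, rfl⟩, -⟩ := hw'
      rw [Equiv.Perm.support_swap hab, Equiv.Perm.support_swap hcd] at hs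
      exact pair_swap_eq hab hcd hs
    · rintro s hs
      rw [Finset.mem_biUnion] at hs
      obtain ⟨v, -, hs⟩ := hs
      rw [Finset.mem_powersetCard] at hs
      obtain ⟨hsub, hcard2⟩ := hs
      obtain ⟨a, b, hab, rfl⟩ := Finset.card_eq_two.1 hcard2
      have ha : f a = v := by
        have := hsub (by simp : a ∈ ({a, b} : Finset (Fin n)))
        simpa using this
      have hb : f b = v := by
        have := hsub (by simp : b ∈ ({a, b} : Finset (Fin n)))
        simpa using this
      refine ⟨Equiv.swap a b, Finset.mem_filter.2 ⟨Finset.mem_univ _, ⟨a, b, hab, rfl⟩, ?_⟩,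
        Equiv.Perm.support_swap hab⟩
      intro i
      rcases eq_or_ne i a with rfl | hia
      · rw [Equiv.swap_apply_left, hb, ha]
      · rcases eq_or_ne i b with rfl | hib
        · rw [Equiv.swap_apply_right, ha, hb]
        · rw [Equiv.swap_apply_of_ne_of_ne hia hib]
  · intro v _ v' _ hvv'
    rw [Function.onFun, Finset.disjoint_left]
    intro s hsv hsv'
    rw [Finset.mem_powersetCard] at hsv hsv'
    obtain ⟨x, hx⟩ := Finset.card_pos.1 (by rw [hsv.2]; norm_num : 0 < s.card)
    have h1 := hsv.1 hx
    have h2 := hsv'.1 hx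
    rw [Finset.mem_filter] at h1 h2
    exact hvv' (h1.2 ▸ h2.2)

lemma row_fiber_card {n : ℕ} {Y : YoungDiagram} (T : Fin n ≃ Y.cells) (v : ℕ) :
    (Finset.univ.filter (fun x : Fin n => (T x).val.1 = v)).card = Y.rowLen v := by
  rw [YoungDiagram.rowLen_eq_card]
  refine Finset.card_bij (fun x _ => (T x).val) ?_ ?_ ?_
  · intro x hx
    rw [Finset.mem_filter] at hx
    exact YoungDiagram.mem_row_iff.2 ⟨(YoungDiagram.mem_cells _).mp (T x).2, hx.2⟩
  · intro x _ x' _ h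
    exact T.injective (Subtype.ext h)
  · intro c hc
    rw [YoungDiagram.mem_row_iff] at hc
    have hc' : c ∈ Y.cells := (YoungDiagram.mem_cells _).mpr hc.1
    refine ⟨T.symm ⟨c, hc'⟩, Finset.mem_filter.2 ⟨Finset.mem_univ _, ?_⟩, ?_⟩
    · rw [Equiv.apply_symm_apply]; exact hc.2
    · show ((T (T.symm ⟨c, hc'⟩)) : ℕ × ℕ) = c
      rw [Equiv.apply_symm_apply]

lemma col_fiber_card {n : ℕ} {Y : YoungDiagram} (T : Fin n ≃ Y.cells) (v : ℕ) :
    (Finset.univ.filter (fun x : Fin n => (T x).val.2 = v)).card = Y.colLen v := by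
  rw [YoungDiagram.colLen_eq_card]
  refine Finset.card_bij (fun x _ => (T x).val) ?_ ?_ ?_
  · intro x hx
    rw [Finset.mem_filter] at hx
    exact YoungDiagram.mem_col_iff.2 ⟨(YoungDiagram.mem_cells _).mp (T x).2, hx.2⟩
  · intro x _ x' _ h
    exact T.injective (Subtype.ext h)
  · intro c hc
    rw [YoungDiagram.mem_col_iff] at hc
    have hc' : c ∈ Y.cells := (YoungDiagram.mem_cells _).mpr hc.1
    refine ⟨T.symm ⟨c, hc'⟩, Finset.mem_filter.2 ⟨Finset.mem_univ _, ?_⟩, ?_⟩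
    · rw [Equiv.apply_symm_apply]; exact hc.2
    · show ((T (T.symm ⟨c, hc'⟩)) : ℕ × ℕ) = c
      rw [Equiv.apply_symm_apply]

lemma row_swap_count {n : ℕ} {Y : YoungDiagram} (T : Fin n ≃ Y.cells) :
    (Finset.univ.filter (fun w : Equiv.Perm (Fin n) =>
        w.IsSwap ∧ ∀ i, (T (w i)).val.1 = (T i).val.1)).card = xi Y := by
  rw [swap_count (fun x => (T x).val.1)]
  rw [Finset.sum_congr rfl (fun v _ => by rw [row_fiber_card T v])]
  refine Finset.sum_subset ?_ ?_
  · intro v hv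
    rw [Finset.mem_image] at hv
    obtain ⟨x, -, rfl⟩ := hv
    rw [Finset.mem_range, ← YoungDiagram.mem_iff_lt_colLen]
    exact Y.up_left_mem (le_refl _) (Nat.zero_le _)
      (by rw [Prod.mk.eta]; exact (YoungDiagram.mem_cells _).mp (T x).2)
  · intro v _ hv
    have h0 : Y.rowLen v = 0 := by
      by_contra h
      apply hv
      have hm : (v, 0) ∈ Y := YoungDiagram.mem_iff_lt_rowLen.2 (Nat.pos_of_ne_zero h)
      refine Finset.mem_image.2 ⟨T.symm ⟨(v, 0), (YoungDiagram.mem_cells _).mpr hm⟩,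
        Finset.mem_univ _, ?_⟩
      rw [Equiv.apply_symm_apply]
    rw [h0]
    rfl

lemma col_swap_count {n : ℕ} {Y : YoungDiagram} (T : Fin n ≃ Y.cells) :
    (Finset.univ.filter (fun w : Equiv.Perm (Fin n) =>
        w.IsSwap ∧ ∀ i, (T (w i)).val.2 = (T i).val.2)).card = xi Y.transpose := by
  rw [swap_count (fun x => (T x).val.2)]
  rw [Finset.sum_congr rfl (fun v _ => by rw [col_fiber_card T v])]
  have hxi : xi Y.transpose = ∑ i ∈ Finset.range (Y.rowLen 0), (Y.colLen i).choose 2 := by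
    unfold xi
    simp
  rw [hxi]
  refine Finset.sum_subset ?_ ?_
  · intro v hv
    rw [Finset.mem_image] at hv
    obtain ⟨x, -, rfl⟩ := hv
    rw [Finset.mem_range, ← YoungDiagram.mem_iff_lt_rowLen]
    exact Y.up_left_mem (Nat.zero_le _) (le_refl _)
      (by rw [Prod.mk.eta]; exact (YoungDiagram.mem_cells _).mp (T x).2)
  · intro v _ hv
    have h0 : Y.colLen v = 0 := by
      by_contra h
      apply hv
      have hm : (0, v) ∈ Y := YoungDiagram.mem_iff_lt_colLen.2 (Nat.pos_of_ne_zero h)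
      refine Finset.mem_image.2 ⟨T.symm ⟨(0, v), (YoungDiagram.mem_cells _).mpr hm⟩,
        Finset.mem_univ _, ?_⟩
      rw [Equiv.apply_symm_apply]
    rw [h0]
    rfl

lemma swap_forall_of_eq {α β : Type*} [DecidableEq α] (g : α → β) {x y : α} (h : g x = g y) :
    ∀ i, g (Equiv.swap x y i) = g i := by
  intro i
  rcases eq_or_ne i x with rfl | hix
  · rw [Equiv.swap_apply_left]; exact h.symm
  · rcases eq_or_ne i y with rfl | hiy
    · rw [Equiv.swap_apply_right]; exact h
    · rw [Equiv.swap_apply_of_ne_of_ne hix hiy]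

/-- For a bijective filling `T` of a Young diagram `Y` with `n` cells,
the Young symmetrizer `a_T · b_T` satisfies
`(a_T · b_T) · z_n = (ξ(Y) − ξ(Yᵀ)) · (a_T · b_T)` in `k[S_n]`, `char k = 0`. -/
theorem stmt_10 {k : Type*} [Field k] [CharZero k] {n : ℕ} (hn : 0 < n)
    (Y : YoungDiagram) (hY : Y.card = n) (T : Fin n ≃ Y.cells) :
    rowSym k Y T * colSym k Y T * transpositionSum k n =
      (((xi Y : ℤ) - (xi Y.transpose : ℤ) : ℤ) : k) • (rowSym k Y T * colSym k Y T) := by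
  set A := rowSym k Y T with hA
  set B := colSym k Y T with hB
  set Prow : Equiv.Perm (Fin n) → Prop :=
    fun w => ∀ i, (T (w i)).val.1 = (T i).val.1 with hProw
  set Pcol : Equiv.Perm (Fin n) → Prop :=
    fun w => ∀ i, (T (w i)).val.2 = (T i).val.2 with hPcol
  set S : Finset (Equiv.Perm (Fin n)) :=
    Finset.univ.filter (fun w : Equiv.Perm (Fin n) => w.IsSwap) with hS
  -- swaps cannot be both row- and column-preserving
  have hnotboth : ∀ τ ∈ S, Pcol τ → ¬Prow τ := by
    intro τ hτ hcol hrow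
    rw [hS, Finset.mem_filter] at hτ
    obtain ⟨x, y, hxy, rfl⟩ := hτ.2
    apply hxy
    apply T.injective
    apply Subtype.ext
    apply Prod.ext
    · have := hrow x
      rw [Equiv.swap_apply_left] at this
      exact this.symm
    · have := hcol x
      rw [Equiv.swap_apply_left] at this
      exact this.symm
  have hZ : transpositionSum k n =
      (∑ τ ∈ S.filter Prow, MonoidAlgebra.single τ (1 : k))
        + ((∑ τ ∈ (S.filter fun w => ¬ Prow w).filter Pcol, MonoidAlgebra.single τ (1 : k))
          + (∑ τ ∈ (S.filter fun w => ¬ Prow w).filter (fun w => ¬ Pcol w),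
              MonoidAlgebra.single τ (1 : k))) := by
    rw [Finset.sum_filter_add_sum_filter_not (S.filter fun w => ¬ Prow w) Pcol,
      Finset.sum_filter_add_sum_filter_not S Prow]
    rfl
  have h1 : A * (∑ τ ∈ S.filter Prow, MonoidAlgebra.single τ (1 : k)) * B
      = (xi Y) • (A * B) := by
    have hsum : (∑ τ ∈ S.filter Prow, A * MonoidAlgebra.single τ (1 : k))
        = (S.filter Prow).card • A := by
      rw [← Finset.sum_const]
      exact Finset.sum_congr rfl
        (fun τ hτ => rowSym_mul_single T τ (Finset.mem_filter.1 hτ).2)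
    rw [Finset.mul_sum, hsum, smul_mul_assoc]
    congr 1
    rw [hS, Finset.filter_filter]
    exact row_swap_count T
  have h2 : A * (∑ τ ∈ (S.filter fun w => ¬ Prow w).filter Pcol,
        MonoidAlgebra.single τ (1 : k)) * B = -((xi Y.transpose) • (A * B)) := by
    have hset : (S.filter fun w => ¬ Prow w).filter Pcol
        = Finset.univ.filter (fun w : Equiv.Perm (Fin n) => w.IsSwap ∧ Pcol w) := by
      ext τ
      simp only [hS, Finset.filter_filter, Finset.mem_filter, Finset.mem_univ, true_and]
      constructor
      · tauto
      · intro h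
        exact ⟨⟨h.1, fun hr => hnotboth τ (by simp [hS, h.1]) h.2 hr⟩, h.2⟩
    have hsum : (∑ τ ∈ Finset.univ.filter (fun w : Equiv.Perm (Fin n) => w.IsSwap ∧ Pcol w),
          MonoidAlgebra.single τ (1 : k) * B)
        = (Finset.univ.filter (fun w : Equiv.Perm (Fin n) => w.IsSwap ∧ Pcol w)).card • (-B) := by
      rw [← Finset.sum_const]
      refine Finset.sum_congr rfl ?_
      intro τ hτ
      rw [Finset.mem_filter] at hτ
      obtain ⟨-, ⟨x, y, hxy, rfl⟩, hcol⟩ := hτ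
      exact single_swap_mul_colSym T hxy hcol
    rw [mul_assoc, hset, Finset.sum_mul, hsum, smul_neg, mul_neg, mul_smul_comm]
    congr 2
    · exact col_swap_count T
  have h3 : A * (∑ τ ∈ (S.filter fun w => ¬ Prow w).filter (fun w => ¬ Pcol w),
        MonoidAlgebra.single τ (1 : k)) * B = 0 := by
    rw [Finset.mul_sum, Finset.sum_mul]
    refine Finset.sum_eq_zero ?_
    intro τ hτ
    simp only [hS, Finset.filter_filter, Finset.mem_filter, Finset.mem_univ, true_and] at hτ
    obtain ⟨⟨⟨x, y, hxy, rfl⟩, hnrow⟩, hncol⟩ := hτ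
    have hrne : (T x).val.1 ≠ (T y).val.1 :=
      fun h => hnrow (swap_forall_of_eq (fun i => (T i).val.1) h)
    have hcne : (T x).val.2 ≠ (T y).val.2 :=
      fun h => hncol (swap_forall_of_eq (fun i => (T i).val.2) h)
    rcases lt_or_gt_of_ne hrne with hlt | hgt
    · exact mixed_aux T hlt hcne
    · rw [Equiv.swap_comm]
      exact mixed_aux T hgt hcne.symm
  have hcomm : A * B * transpositionSum k n = A * transpositionSum k n * B := by
    rw [mul_assoc, mul_transpositionSum_comm B, ← mul_assoc]
  rw [hcomm, hZ, mul_add, add_mul, mul_add, add_mul, h1, h2, h3, add_zero]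
  push_cast
  rw [sub_smul, Nat.cast_smul_eq_nsmul, Nat.cast_smul_eq_nsmul, sub_eq_add_neg]
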